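/- arXiv:2212.06999 — 3 statements merged into one kernel-verified Lean document; each statement's English description precedes it below -/
import Mathlib

section
/- The Taylor complex is a free resolution of Q/I over Q: the complex 0 → T_r → ⋯ → T_1 → T_0 = Q with differentials τ is exact in homological degrees k ≥ 1, and the cokernel of τ_1 : T_1 → T_0 is isomorphic to Q/I. -/
open MvPolynomial

/-- The position `p_{t,S}` of `t` in `S ∪ {t}`: one plus the number of elements of `S`
smaller than `t`. -/
def taylorPos {r : ℕ} (S : Finset (Fin r)) (t : Fin r) : ℕ :=
  (S.filter fun s => s < t).card + 1

variable (𝕜 : Type*) [Field 𝕜] {n r : ℕ}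

/-- `m_S`: the lcm of the monomials `m_j = x^{v j}` for `j ∈ S` (equal to `1` when `S = ∅`). -/
noncomputable def taylorLcm (v : Fin r → (Fin n →₀ ℕ)) (S : Finset (Fin r)) :
    MvPolynomial (Fin n) 𝕜 :=
  monomial (S.sup v) 1

/-- The matrix entry of the Taylor differential: `(-1)^{k-i} m_S / m_{S∖{s}}`
(where `i = p_{s,S}` is the position of `s` in `S` and `k = |S|`). -/
noncomputable def taylorEntry (v : Fin r → (Fin n →₀ ℕ)) (S : Finset (Fin r)) (s : Fin r) :
    MvPolynomial (Fin n) 𝕜 :=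
  (-1) ^ (S.card - taylorPos S s) * monomial (S.sup v - (S.erase s).sup v) 1

/-- The matrix entry of the homotopy `σ`:
`(-1)^{k - p_{t,S} - 1} f_t m_t m_S / m_{S ∪ {t}}` (where `k = |S|`); the sign is written as
`(-1)^{k + p_{t,S} + 1}`, which agrees with `(-1)^{k - p_{t,S} - 1}` since the exponents have
the same parity. -/
noncomputable def htpyEntry (v : Fin r → (Fin n →₀ ℕ)) (f : Fin r → MvPolynomial (Fin n) 𝕜)
    (S : Finset (Fin r)) (t : Fin r) : MvPolynomial (Fin n) 𝕜 :=
  (-1) ^ (S.card + taylorPos S t + 1) *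
    (f t * monomial (v t + S.sup v - (insert t S).sup v) 1)

/-- The total module of the Taylor complex: the free `Q`-module with basis
`{ε_S : S ⊆ {1,…,r}}`; the basis element `ε_S` is `Finsupp.single S 1`. -/
abbrev TaylorModule (n r : ℕ) := Finset (Fin r) →₀ MvPolynomial (Fin n) 𝕜

/-- The Taylor differential `τ` on the total module,
`τ(ε_S) = Σ_{s ∈ S} (-1)^{|S| - p_{s,S}} (m_S / m_{S∖{s}}) ε_{S∖{s}}`. -/
noncomputable def taylorTau (v : Fin r → (Fin n →₀ ℕ)) :
    TaylorModule 𝕜 n r →ₗ[MvPolynomial (Fin n) 𝕜] TaylorModule 𝕜 n r :=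
  Finsupp.lsum (MvPolynomial (Fin n) 𝕜) fun S =>
    LinearMap.toSpanSingleton _ _
      (∑ s ∈ S, Finsupp.single (S.erase s) (taylorEntry 𝕜 v S s))

/-- The homotopy `σ` attached to a coefficient family `f` (with `a = Σ_j f_j m_j`):
`σ(ε_S) = Σ_{t ∉ S} (-1)^{|S| - p_{t,S} - 1} (f_t m_t m_S / m_{S∪{t}}) ε_{S∪{t}}`. -/
noncomputable def taylorHtpy (v : Fin r → (Fin n →₀ ℕ)) (f : Fin r → MvPolynomial (Fin n) 𝕜) :
    TaylorModule 𝕜 n r →ₗ[MvPolynomial (Fin n) 𝕜] TaylorModule 𝕜 n r :=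
  Finsupp.lsum (MvPolynomial (Fin n) 𝕜) fun S =>
    LinearMap.toSpanSingleton _ _
      (∑ t ∈ Sᶜ, Finsupp.single (insert t S) (htpyEntry 𝕜 v f S t))

/-- The `k`-th module of the Taylor complex: the free `Q`-module with basis
`{ε_S : S ⊆ {1,…,r}, |S| = k}`. -/
abbrev TaylorModuleGr (𝕜 : Type*) [Field 𝕜] (n r k : ℕ) :=
  {S : Finset (Fin r) // S.card = k} →₀ MvPolynomial (Fin n) 𝕜

/-- The Taylor differential `τ_{k+1} : T_{k+1} → T_k`. -/
noncomputable def taylorTauGr {𝕜 : Type*} [Field 𝕜] {n r : ℕ}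
    (v : Fin r → (Fin n →₀ ℕ)) (k : ℕ) :
    TaylorModuleGr 𝕜 n r (k + 1) →ₗ[MvPolynomial (Fin n) 𝕜] TaylorModuleGr 𝕜 n r k :=
  Finsupp.lsum (MvPolynomial (Fin n) 𝕜) fun S =>
    LinearMap.toSpanSingleton _ _
      (∑ s ∈ S.1.attach,
        Finsupp.single
          ⟨S.1.erase s.1, by simp [Finset.card_erase_of_mem s.2, S.2]⟩
          (taylorEntry 𝕜 v S.1 s.1))

section TaylorAuxSection
variable {𝕜}
namespace TaylorAux

variable (v : Fin r → (Fin n →₀ ℕ))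

/-- choose `t` with `v t ≤ a`, if one exists -/
noncomputable def pickT (a : Fin n →₀ ℕ) : Option (Fin r) :=
  if h : ∃ t, v t ≤ a then some h.choose else none

lemma pickT_le {a : Fin n →₀ ℕ} {t : Fin r} (h : pickT v a = some t) : v t ≤ a := by
  unfold pickT at h
  split at h
  · next h' => cases h; exact h'.choose_spec
  · simp at h

lemma pickT_isSome {a : Fin n →₀ ℕ} {t0 : Fin r} (h : v t0 ≤ a) :
    ∃ t, pickT v a = some t := by
  unfold pickT
  rw [dif_pos ⟨t0, h⟩]
  exact ⟨_, rfl⟩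

/-- the homotopy on a basis element, ungraded level -/
noncomputable def hEltU (A : Finset (Fin r)) (b : Fin n →₀ ℕ) : TaylorModule 𝕜 n r :=
  (pickT v (b + A.sup v)).elim 0 fun t =>
    if t ∈ A then 0 else
      Finsupp.single (insert t A)
        (monomial (b + A.sup v - (insert t A).sup v)
          ((-1 : 𝕜) ^ (A.card + taylorPos A t + 1)))

/-- graded version -/
noncomputable def hElt (k : ℕ) (S : {S : Finset (Fin r) // S.card = k}) (b : Fin n →₀ ℕ) :
    TaylorModuleGr 𝕜 n r (k + 1) :=
  match h : pickT v (b + S.1.sup v) with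
  | none => 0
  | some t =>
      if ht : t ∈ S.1 then 0 else
        Finsupp.single ⟨insert t S.1, by simp [Finset.card_insert_of_notMem ht, S.2]⟩
          (monomial (b + S.1.sup v - (insert t S.1).sup v)
            ((-1 : 𝕜) ^ (S.1.card + taylorPos S.1 t + 1)))

/-- the homotopy as a `𝕜`-linear map -/
noncomputable def H (k : ℕ) :
    TaylorModuleGr 𝕜 n r k →ₗ[𝕜] TaylorModuleGr 𝕜 n r (k + 1) :=
  Finsupp.lsum 𝕜 fun S => (MvPolynomial.basisMonomials (Fin n) 𝕜).constr 𝕜 (hElt v k S)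

lemma H_single_monomial (k : ℕ) (S : {S : Finset (Fin r) // S.card = k})
    (b : Fin n →₀ ℕ) (c : 𝕜) :
    H v k (Finsupp.single S (monomial b c)) = c • hElt v k S b := by
  rw [H, Finsupp.lsum_single]
  have : (monomial b c : MvPolynomial (Fin n) 𝕜)
      = c • (MvPolynomial.basisMonomials (Fin n) 𝕜) b := by
    rw [coe_basisMonomials]; simp [MvPolynomial.smul_monomial]
  rw [this, map_smul, Module.Basis.constr_basis]

/-- embedding of the graded piece into the ungraded module -/
noncomputable def emb (k : ℕ) :
    TaylorModuleGr 𝕜 n r k →ₗ[MvPolynomial (Fin n) 𝕜] TaylorModule 𝕜 n r :=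
  Finsupp.lmapDomain _ _ Subtype.val

lemma emb_injective (k : ℕ) : Function.Injective (emb (𝕜 := 𝕜) (n := n) (r := r) k) :=
  Finsupp.mapDomain_injective Subtype.val_injective

lemma emb_single (k : ℕ) (S : {S : Finset (Fin r) // S.card = k})
    (q : MvPolynomial (Fin n) 𝕜) :
    emb k (Finsupp.single S q) = Finsupp.single S.1 q := by
  simp [emb, Finsupp.mapDomain_single]

lemma emb_tauGr (k : ℕ) (S : {S : Finset (Fin r) // S.card = k + 1})
    (q : MvPolynomial (Fin n) 𝕜) :
    emb k (taylorTauGr v k (Finsupp.single S q))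
      = ∑ s ∈ S.1, Finsupp.single (S.1.erase s) (q * taylorEntry 𝕜 v S.1 s) := by
  rw [taylorTauGr, Finsupp.lsum_single, LinearMap.toSpanSingleton_apply, map_smul,
    map_sum]
  rw [Finset.smul_sum]
  rw [← Finset.sum_attach S.1 (fun s => Finsupp.single (S.1.erase s) (q * taylorEntry 𝕜 v S.1 s))]
  refine Finset.sum_congr rfl fun s _ => ?_
  rw [emb_single, Finsupp.smul_single, smul_eq_mul]

lemma emb_hElt (k : ℕ) (S : {S : Finset (Fin r) // S.card = k}) (b : Fin n →₀ ℕ) :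
    emb (k + 1) (hElt v k S b) = hEltU (𝕜 := 𝕜) v S.1 b := by
  rw [hElt, hEltU]
  rcases h : pickT v (b + S.1.sup v) with _ | t
  · simp [h]
  · simp only [h, Option.elim]
    by_cases ht : t ∈ S.1
    · simp [ht]
    · rw [dif_neg (by exact ht), emb_single, if_neg ht]

end TaylorAux

end TaylorAuxSection

section Stage2
variable {𝕜 : Type*} [Field 𝕜] {n r : ℕ} (v : Fin r → (Fin n →₀ ℕ))
open MvPolynomial Finset

namespace TaylorAux

lemma neg_one_pow_congr {i j : ℕ} (h : i % 2 = j % 2) : ((-1 : 𝕜)) ^ i = (-1) ^ j := by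
  rw [neg_one_pow_eq_pow_mod_two, h, ← neg_one_pow_eq_pow_mod_two]

lemma neg_one_pow_add_neg_one_pow {i j : ℕ} (h : i % 2 ≠ j % 2) :
    ((-1 : 𝕜)) ^ i + (-1) ^ j = 0 := by
  have : ((-1 : 𝕜)) ^ i = (-1) ^ (j + 1) := neg_one_pow_congr (by omega)
  rw [this, pow_succ]
  ring

lemma taylorPos_le_card {S : Finset (Fin r)} {s : Fin r} (hs : s ∈ S) :
    taylorPos S s ≤ S.card := by
  have h1 : (S.filter fun x => x < s) ⊆ S.erase s := by
    intro x hx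
    rw [Finset.mem_filter] at hx
    exact Finset.mem_erase.mpr ⟨ne_of_lt hx.2, hx.1⟩
  have h2 := Finset.card_le_card h1
  rw [Finset.card_erase_of_mem hs] at h2
  have h3 : 1 ≤ S.card := Finset.card_pos.mpr ⟨s, hs⟩
  unfold taylorPos
  omega

lemma taylorPos_erase_self (S : Finset (Fin r)) (t : Fin r) :
    taylorPos (S.erase t) t = taylorPos S t := by
  unfold taylorPos
  rw [Finset.filter_erase, Finset.erase_eq_of_notMem (by simp)]

lemma taylorPos_insert_self (S : Finset (Fin r)) (t : Fin r) :
    taylorPos (insert t S) t = taylorPos S t := by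
  unfold taylorPos
  rw [Finset.filter_insert, if_neg (lt_irrefl t)]

lemma taylorPos_insert_of_lt {t s : Fin r} (h : t < s) {S : Finset (Fin r)} (ht : t ∉ S) :
    taylorPos (insert t S) s = taylorPos S s + 1 := by
  unfold taylorPos
  rw [Finset.filter_insert, if_pos h,
    Finset.card_insert_of_notMem (fun hc => ht (Finset.mem_filter.mp hc).1)]

lemma taylorPos_insert_of_gt {t s : Fin r} (h : s < t) (S : Finset (Fin r)) :
    taylorPos (insert t S) s = taylorPos S s := by
  unfold taylorPos
  rw [Finset.filter_insert, if_neg (by exact fun hc => absurd hc (not_lt.mpr h.le))]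

lemma taylorPos_erase_of_gt {t s : Fin r} (h : t < s) (S : Finset (Fin r)) :
    taylorPos (S.erase s) t = taylorPos S t := by
  unfold taylorPos
  rw [Finset.filter_erase, Finset.erase_eq_of_notMem (by
    simp only [Finset.mem_filter, not_and]
    exact fun _ hc => absurd hc (not_lt.mpr h.le))]

lemma taylorPos_erase_of_lt {t s : Fin r} (h : s < t) {S : Finset (Fin r)} (hs : s ∈ S) :
    taylorPos S t = taylorPos (S.erase s) t + 1 := by
  unfold taylorPos
  rw [Finset.filter_erase]
  have hmem : s ∈ S.filter fun x => x < t := Finset.mem_filter.mpr ⟨hs, h⟩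
  rw [Finset.card_erase_of_mem hmem]
  have : 1 ≤ (S.filter fun x => x < t).card := Finset.card_pos.mpr ⟨s, hmem⟩
  omega

lemma erase_comm' (S : Finset (Fin r)) (a b : Fin r) :
    (S.erase a).erase b = (S.erase b).erase a := by
  ext x; simp only [Finset.mem_erase]; tauto

lemma taylorEntry_eq (S : Finset (Fin r)) (s : Fin r) :
    taylorEntry 𝕜 v S s
      = monomial (S.sup v - (S.erase s).sup v) ((-1 : 𝕜) ^ (S.card - taylorPos S s)) := by
  unfold taylorEntry
  have : ((-1 : MvPolynomial (Fin n) 𝕜)) ^ (S.card - taylorPos S s)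
      = C ((-1 : 𝕜) ^ (S.card - taylorPos S s)) := by
    rw [map_pow, map_neg, map_one]
  rw [this, C_mul_monomial, mul_one]

lemma sup_erase_le (S : Finset (Fin r)) (s : Fin r) : (S.erase s).sup v ≤ S.sup v :=
  Finset.sup_mono (Finset.erase_subset s S)

end TaylorAux
end Stage2

section Stage3
variable {𝕜 : Type*} [Field 𝕜] {n r : ℕ} (v : Fin r → (Fin n →₀ ℕ))
open MvPolynomial Finset

namespace TaylorAux

lemma taylorPos_le_card_add_one (S : Finset (Fin r)) (t : Fin r) :
    taylorPos S t ≤ S.card + 1 := by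
  unfold taylorPos
  have := Finset.card_le_card (Finset.filter_subset (fun s => s < t) S)
  omega

lemma hEltU_some {A : Finset (Fin r)} {b : Fin n →₀ ℕ} {t : Fin r}
    (h : pickT v (b + A.sup v) = some t) :
    hEltU (𝕜 := 𝕜) v A b = if t ∈ A then 0 else
      Finsupp.single (insert t A)
        (monomial (b + A.sup v - (insert t A).sup v)
          ((-1 : 𝕜) ^ (A.card + taylorPos A t + 1))) := by
  rw [hEltU, h]
  rfl

lemma tauGr_single (k : ℕ) (S : {S : Finset (Fin r) // S.card = k + 1})
    (q : MvPolynomial (Fin n) 𝕜) :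
    taylorTauGr v k (Finsupp.single S q)
      = ∑ s ∈ S.1.attach,
          Finsupp.single
            (⟨S.1.erase s.1, by simp [Finset.card_erase_of_mem s.2, S.2]⟩ :
              {S : Finset (Fin r) // S.card = k})
            (q * taylorEntry 𝕜 v S.1 s.1) := by
  rw [taylorTauGr, Finsupp.lsum_single, LinearMap.toSpanSingleton_apply, Finset.smul_sum]
  exact Finset.sum_congr rfl fun s _ => by rw [Finsupp.smul_single, smul_eq_mul]

lemma key_single (k : ℕ) (S : {S : Finset (Fin r) // S.card = k + 1})
    (b : Fin n →₀ ℕ) (c : 𝕜) :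
    taylorTauGr v (k + 1) (H v (k + 1) (Finsupp.single S (monomial b c)))
      + H v k (taylorTauGr v k (Finsupp.single S (monomial b c)))
      = Finsupp.single S (monomial b c) := by
  classical
  set a := b + S.1.sup v with ha
  obtain ⟨s0, hs0⟩ := Finset.card_pos.mp (show 0 < S.1.card by rw [S.2]; omega)
  have hs0a : v s0 ≤ a := le_trans (Finset.le_sup hs0) le_add_self
  obtain ⟨t, hpt⟩ := pickT_isSome v hs0a
  have hvt : v t ≤ a := pickT_le v hpt
  have hSsup : S.1.sup v ≤ a := le_add_self
  -- the second term
  have hterm2 : emb (k + 1) (H v k (taylorTauGr v k (Finsupp.single S (monomial b c))))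
      = ∑ s ∈ S.1, (if t ∈ S.1.erase s then 0 else
          Finsupp.single (insert t (S.1.erase s))
            (monomial (a - (insert t (S.1.erase s)).sup v)
              ((c * (-1) ^ (S.1.card - taylorPos S.1 s))
                * (-1) ^ ((S.1.erase s).card + taylorPos (S.1.erase s) t + 1)))) := by
    rw [tauGr_single, map_sum, map_sum,
      ← Finset.sum_attach S.1 (fun s => (if t ∈ S.1.erase s then 0 else
          Finsupp.single (insert t (S.1.erase s))
            (monomial (a - (insert t (S.1.erase s)).sup v)
              ((c * (-1) ^ (S.1.card - taylorPos S.1 s))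
                * (-1) ^ ((S.1.erase s).card + taylorPos (S.1.erase s) t + 1)))))]
    refine Finset.sum_congr rfl fun s _ => ?_
    have harg : b + (S.1.sup v - (S.1.erase s.1).sup v) + (S.1.erase s.1).sup v = a := by
      rw [add_assoc, tsub_add_cancel_of_le (sup_erase_le v S.1 s.1)]
    have hpt' : pickT v
        (b + (S.1.sup v - (S.1.erase s.1).sup v) + (S.1.erase s.1).sup v) = some t := by
      rw [harg]; exact hpt
    rw [taylorEntry_eq, monomial_mul, H_single_monomial, LinearMap.map_smul_of_tower,
      emb_hElt, hEltU_some v hpt', harg, smul_ite, smul_zero, Finsupp.smul_single,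
      MvPolynomial.smul_monomial, smul_eq_mul]
  rw [← emb_injective (𝕜 := 𝕜) (n := n) (r := r) (k + 1) |>.eq_iff, map_add, hterm2,
    emb_single]
  by_cases htS : t ∈ S.1
  · -- apex already in S : first term vanishes
    have h1 : hElt (𝕜 := 𝕜) v (k + 1) S b = 0 := by
      apply emb_injective
      rw [emb_hElt, hEltU_some v hpt, if_pos htS, map_zero]
    rw [H_single_monomial, h1, smul_zero, map_zero, map_zero, zero_add]
    rw [Finset.sum_eq_single_of_mem t htS (fun s hs hne => by
      rw [if_pos (Finset.mem_erase.mpr ⟨hne.symm, htS⟩)])]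
    rw [if_neg (Finset.notMem_erase t S.1), Finset.insert_erase htS]
    have hple := taylorPos_le_card htS
    rw [Finset.card_erase_of_mem htS, taylorPos_erase_self, mul_assoc, ← pow_add,
      neg_one_pow_congr (j := 0) (by omega), pow_zero, mul_one, ha, add_tsub_cancel_right]
  · -- apex not in S
    have hTcard : (insert t S.1).card = k + 1 + 1 :=
      by rw [Finset.card_insert_of_notMem htS, S.2]
    have h1 : hElt v (k + 1) S b = Finsupp.single
        (⟨insert t S.1, hTcard⟩ : {A : Finset (Fin r) // A.card = k + 1 + 1})
        (monomial (a - (insert t S.1).sup v)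
          ((-1 : 𝕜) ^ (S.1.card + taylorPos S.1 t + 1))) := by
      apply emb_injective
      rw [emb_hElt, hEltU_some v hpt, if_neg htS, emb_single]
    have hTsup : (insert t S.1).sup v ≤ a := by
      rw [Finset.sup_insert]; exact sup_le hvt hSsup
    have hterm1 : emb (k + 1)
        (taylorTauGr v (k + 1) (H v (k + 1) (Finsupp.single S (monomial b c))))
        = ∑ s' ∈ insert t S.1,
            Finsupp.single ((insert t S.1).erase s')
              (monomial (a - (insert t S.1).sup v
                  + ((insert t S.1).sup v - ((insert t S.1).erase s').sup v))
                (c * ((-1 : 𝕜) ^ (S.1.card + taylorPos S.1 t + 1)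
                  * (-1) ^ ((insert t S.1).card - taylorPos (insert t S.1) s')))) := by
      rw [H_single_monomial, h1, LinearMap.map_smul_of_tower, LinearMap.map_smul_of_tower,
        emb_tauGr, Finset.smul_sum]
      refine Finset.sum_congr rfl fun s' _ => ?_
      rw [taylorEntry_eq, monomial_mul, Finsupp.smul_single, MvPolynomial.smul_monomial,
        smul_eq_mul]
    rw [hterm1, Finset.sum_insert htS]
    have hmain : Finsupp.single ((insert t S.1).erase t)
        (monomial (a - (insert t S.1).sup v
            + ((insert t S.1).sup v - ((insert t S.1).erase t).sup v))
          (c * ((-1 : 𝕜) ^ (S.1.card + taylorPos S.1 t + 1)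
            * (-1) ^ ((insert t S.1).card - taylorPos (insert t S.1) t))))
        = Finsupp.single S.1 (monomial b c) := by
      have hple := taylorPos_le_card_add_one S.1 t
      rw [Finset.erase_insert htS,
        tsub_add_tsub_cancel hTsup (Finset.sup_mono (Finset.subset_insert t S.1)),
        taylorPos_insert_self, hTcard, S.2, ← pow_add,
        neg_one_pow_congr (j := 0) (by rw [S.2] at hple; omega), pow_zero, mul_one,
        ha, add_tsub_cancel_right]
    rw [hmain, add_assoc, add_eq_left, ← Finset.sum_add_distrib]
    apply Finset.sum_eq_zero
    intro s hs
    have hts : t ≠ s := fun h => htS (h ▸ hs)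
    have hple1 := taylorPos_le_card (Finset.mem_insert_self t S.1)
    have hps : taylorPos S.1 s ≤ k + 1 := by have := taylorPos_le_card hs; rw [S.2] at this; omega
    have hpt2 : taylorPos S.1 t ≤ k + 2 := by
      have := taylorPos_le_card_add_one S.1 t; omega
    rw [if_neg (fun h => htS (Finset.mem_of_mem_erase h)),
      ← Finset.erase_insert_of_ne hts,
      tsub_add_tsub_cancel hTsup (sup_erase_le v (insert t S.1) s),
      ← Finsupp.single_add, ← map_add, Finset.card_erase_of_mem hs, hTcard, S.2,
      mul_assoc c ((-1 : 𝕜) ^ (k + 1 - taylorPos S.1 s)), ← pow_add, ← pow_add, ← mul_add]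
    rcases lt_or_gt_of_ne hts with hlt | hgt
    · -- t < s
      have h1 : taylorPos (insert t S.1) s = taylorPos S.1 s + 1 :=
        taylorPos_insert_of_lt hlt htS
      have h2 : taylorPos (S.1.erase s) t = taylorPos S.1 t :=
        taylorPos_erase_of_gt hlt S.1
      have hpTs : taylorPos (insert t S.1) s ≤ k + 1 + 1 := by
        have := taylorPos_le_card (Finset.mem_insert_of_mem (b := t) hs)
        rw [hTcard] at this; omega
      rw [neg_one_pow_add_neg_one_pow (by omega), mul_zero, map_zero, Finsupp.single_zero]
    · -- s < t
      have h1 : taylorPos (insert t S.1) s = taylorPos S.1 s :=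
        taylorPos_insert_of_gt hgt S.1
      have h2 : taylorPos S.1 t = taylorPos (S.1.erase s) t + 1 :=
        taylorPos_erase_of_lt hgt hs
      have hpTs : taylorPos (insert t S.1) s ≤ k + 1 + 1 := by
        have := taylorPos_le_card (Finset.mem_insert_of_mem (b := t) hs)
        rw [hTcard] at this; omega
      rw [neg_one_pow_add_neg_one_pow (by omega), mul_zero, map_zero, Finsupp.single_zero]
end TaylorAux
end Stage3

section Stage4
variable {𝕜 : Type*} [Field 𝕜] {n r : ℕ} (v : Fin r → (Fin n →₀ ℕ))
open MvPolynomial Finset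

namespace TaylorAux

lemma key (k : ℕ) (z : TaylorModuleGr 𝕜 n r (k + 1)) :
    taylorTauGr v (k + 1) (H v (k + 1) z) + H v k (taylorTauGr v k z) = z := by
  induction z using Finsupp.induction_linear with
  | zero => simp
  | add z1 z2 h1 h2 =>
    rw [map_add, map_add, map_add, map_add, add_add_add_comm, h1, h2]
  | single S q =>
    induction q using MvPolynomial.induction_on' with
    | monomial u c => exact key_single v k S u c
    | add p q hp hq =>
      rw [Finsupp.single_add, map_add, map_add, map_add, map_add, add_add_add_comm, hp, hq]

lemma tau_sq (k : ℕ) (z : TaylorModuleGr 𝕜 n r (k + 1 + 1)) :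
    taylorTauGr v k (taylorTauGr v (k + 1) z) = 0 := by
  induction z using Finsupp.induction_linear with
  | zero => simp
  | add z1 z2 h1 h2 => rw [map_add, map_add, h1, h2, add_zero]
  | single S q =>
    apply emb_injective (𝕜 := 𝕜) k
    rw [map_zero, tauGr_single, map_sum, map_sum]
    have hstep : ∀ s ∈ S.1.attach,
        emb k (taylorTauGr v k
          (Finsupp.single
            (⟨S.1.erase s.1, by simp [Finset.card_erase_of_mem s.2, S.2]⟩ :
              {A : Finset (Fin r) // A.card = k + 1})
            (q * taylorEntry 𝕜 v S.1 s.1)))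
        = ∑ s' ∈ S.1.erase s.1, Finsupp.single ((S.1.erase s.1).erase s')
            ((q * taylorEntry 𝕜 v S.1 s.1) * taylorEntry 𝕜 v (S.1.erase s.1) s') := by
      intro s _
      rw [emb_tauGr]
    rw [Finset.sum_congr rfl hstep,
      Finset.sum_attach S.1 (fun s => ∑ s' ∈ S.1.erase s, Finsupp.single ((S.1.erase s).erase s')
        ((q * taylorEntry 𝕜 v S.1 s) * taylorEntry 𝕜 v (S.1.erase s) s')),
      Finset.sum_sigma' S.1 (fun s => S.1.erase s)]
    apply Finset.sum_involution (g := fun p _ => (⟨p.2, p.1⟩ : (_ : Fin r) × Fin r))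
    · -- f p + f (swap p) = 0
      rintro ⟨s, s'⟩ hp
      rw [Finset.mem_sigma] at hp
      obtain ⟨hsA, hs'⟩ := hp
      replace hsA : s ∈ S.1 := hsA
      replace hs' : s' ∈ S.1.erase s := hs'
      have hne : s' ≠ s := Finset.ne_of_mem_erase hs'
      have hs'A : s' ∈ S.1 := Finset.mem_of_mem_erase hs'
      have hcard : 1 ≤ S.1.card := Finset.card_pos.mpr ⟨s, hsA⟩
      have b1 : taylorPos S.1 s ≤ S.1.card := taylorPos_le_card hsA
      have b2 : taylorPos S.1 s' ≤ S.1.card := taylorPos_le_card hs'A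
      have b3 : taylorPos (S.1.erase s) s' ≤ S.1.card - 1 := by
        have := taylorPos_le_card hs'
        rwa [Finset.card_erase_of_mem hsA] at this
      have b4 : taylorPos (S.1.erase s') s ≤ S.1.card - 1 := by
        have := taylorPos_le_card (Finset.mem_erase.mpr ⟨Ne.symm hne, hsA⟩)
        rwa [Finset.card_erase_of_mem hs'A] at this
      simp only []
      rw [taylorEntry_eq, taylorEntry_eq, taylorEntry_eq, taylorEntry_eq,
        mul_assoc q, mul_assoc q, monomial_mul, monomial_mul,
        tsub_add_tsub_cancel (sup_erase_le v S.1 s) (sup_erase_le v (S.1.erase s) s'),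
        tsub_add_tsub_cancel (sup_erase_le v S.1 s') (sup_erase_le v (S.1.erase s') s),
        erase_comm' S.1 s s', ← Finsupp.single_add, ← mul_add, ← map_add,
        Finset.card_erase_of_mem hsA, Finset.card_erase_of_mem hs'A]
      rcases lt_or_gt_of_ne hne with hlt | hgt
      · -- s' < s
        have h1 : taylorPos (S.1.erase s) s' = taylorPos S.1 s' :=
          taylorPos_erase_of_gt hlt S.1
        have h2 : taylorPos S.1 s = taylorPos (S.1.erase s') s + 1 :=
          taylorPos_erase_of_lt hlt hs'A
        rw [← pow_add, ← pow_add, neg_one_pow_add_neg_one_pow (by omega), map_zero, mul_zero,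
          Finsupp.single_zero]
      · -- s < s'
        have h1 : taylorPos (S.1.erase s') s = taylorPos S.1 s :=
          taylorPos_erase_of_gt hgt S.1
        have h2 : taylorPos S.1 s' = taylorPos (S.1.erase s) s' + 1 :=
          taylorPos_erase_of_lt hgt hsA
        rw [← pow_add, ← pow_add, neg_one_pow_add_neg_one_pow (by omega), map_zero, mul_zero,
          Finsupp.single_zero]
    · -- g p ≠ p when f p ≠ 0
      rintro ⟨s, s'⟩ hp _
      rw [Finset.mem_sigma] at hp
      intro hc
      have : s' = s := congrArg Sigma.fst hc
      exact Finset.ne_of_mem_erase hp.2 this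
    · -- g p ∈ sigma set
      rintro ⟨s, s'⟩ hp
      rw [Finset.mem_sigma] at hp ⊢
      refine ⟨Finset.mem_of_mem_erase hp.2, Finset.mem_erase.mpr ⟨?_, hp.1⟩⟩
      exact fun hc => Finset.ne_of_mem_erase hp.2 hc.symm
    · rintro ⟨s, s'⟩ _
      rfl

lemma exact_lemma (k : ℕ) :
    Function.Exact (taylorTauGr v (k + 1)) (taylorTauGr (𝕜 := 𝕜) v k) := by
  intro z
  constructor
  · intro hz
    refine ⟨H v (k + 1) z, ?_⟩
    have hk := key v k z
    rw [hz, map_zero, add_zero] at hk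
    exact hk
  · rintro ⟨y, rfl⟩
    exact tau_sq v k y

end TaylorAux
end Stage4

section Stage5
variable {𝕜 : Type*} [Field 𝕜] {n r : ℕ} (v : Fin r → (Fin n →₀ ℕ))
open MvPolynomial Finset

namespace TaylorAux

instance : Unique {S : Finset (Fin r) // S.card = 0} where
  default := ⟨∅, rfl⟩
  uniq S := Subtype.ext (Finset.card_eq_zero.mp S.2)

noncomputable def e0 : TaylorModuleGr 𝕜 n r 0 ≃ₗ[MvPolynomial (Fin n) 𝕜] MvPolynomial (Fin n) 𝕜 :=
  Finsupp.LinearEquiv.finsuppUnique _ _ _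

lemma e0_single (X : {S : Finset (Fin r) // S.card = 0}) (q : MvPolynomial (Fin n) 𝕜) :
    e0 (Finsupp.single X q) = q := by
  rw [e0, Finsupp.LinearEquiv.finsuppUnique_apply, Subsingleton.elim (default : {S : Finset (Fin r) // S.card = 0}) X,
    Finsupp.single_eq_same]

lemma entry_singleton (j : Fin r) :
    taylorEntry 𝕜 v {j} j = monomial (v j) 1 := by
  rw [taylorEntry_eq]
  have h1 : taylorPos {j} j = 1 := by
    unfold taylorPos
    rw [Finset.filter_singleton, if_neg (lt_irrefl j), Finset.card_empty]
  rw [h1, Finset.card_singleton, Finset.erase_singleton, Finset.sup_singleton,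
    Finset.sup_empty]
  simp [bot_eq_zero]

lemma e0_tau0 (j : Fin r) (q : MvPolynomial (Fin n) 𝕜) :
    e0 (taylorTauGr v 0 (Finsupp.single ⟨{j}, Finset.card_singleton j⟩ q))
      = q * monomial (v j) 1 := by
  rw [tauGr_single, map_sum]
  have hcongr : ∀ s ∈ ({j} : Finset (Fin r)).attach,
      e0 (Finsupp.single
        (⟨({j} : Finset (Fin r)).erase s.1, by simp [Finset.card_erase_of_mem s.2]⟩ :
          {S : Finset (Fin r) // S.card = 0})
        (q * taylorEntry 𝕜 v {j} s.1))
      = q * taylorEntry 𝕜 v {j} s.1 := fun s _ => e0_single _ _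
  rw [Finset.sum_congr rfl hcongr,
    Finset.sum_attach ({j} : Finset (Fin r)) (fun s => q * taylorEntry 𝕜 v {j} s),
    Finset.sum_singleton, entry_singleton]

lemma coker_map :
    Submodule.map (e0 (𝕜 := 𝕜) (n := n) (r := r)).toLinearMap
        (LinearMap.range (taylorTauGr (𝕜 := 𝕜) v 0))
      = Ideal.span (Set.range fun j => monomial (v j) (1 : 𝕜)) := by
  apply le_antisymm
  · rintro x hx
    obtain ⟨y0, ⟨y, rfl⟩, rfl⟩ := hx
    rw [LinearEquiv.coe_toLinearMap]
    induction y using Finsupp.induction_linear with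
    | zero => simp
    | add f g hf hg => rw [map_add, map_add]; exact add_mem hf hg
    | single S q =>
      obtain ⟨j, hj⟩ := Finset.card_eq_one.mp S.2
      have hS : S = ⟨{j}, Finset.card_singleton j⟩ := Subtype.ext hj
      rw [hS, e0_tau0]
      exact Ideal.mul_mem_left _ q (Ideal.subset_span ⟨j, rfl⟩)
  · rw [Ideal.span_le]
    rintro x ⟨j, rfl⟩
    exact ⟨taylorTauGr v 0 (Finsupp.single ⟨{j}, Finset.card_singleton j⟩ 1),
      ⟨⟨_, rfl⟩, by rw [LinearEquiv.coe_toLinearMap, e0_tau0, one_mul]⟩⟩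

end TaylorAux
end Stage5

/-- The Taylor complex is a free resolution of `Q/I` over `Q`: the complex
`0 → T_r → ⋯ → T_1 → T_0 = Q` with differentials `τ` is exact in homological degrees
`k ≥ 1` (i.e. exact at `T_{k+1}` for every `k ≥ 0`), and the cokernel of
`τ_1 : T_1 → T_0` is isomorphic to `Q/I`, where `I = ⟨m_1, …, m_r⟩` is generated by the
monomials `m_j = x^{v j}`. -/
theorem taylor_is_resolution {𝕜 : Type*} [Field 𝕜] {n r : ℕ}
    (v : Fin r → (Fin n →₀ ℕ)) :
    (∀ k : ℕ, Function.Exact (taylorTauGr v (k + 1)) (taylorTauGr (𝕜 := 𝕜) v k)) ∧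
    Nonempty
      ((TaylorModuleGr 𝕜 n r 0 ⧸ LinearMap.range (taylorTauGr (𝕜 := 𝕜) v 0)) ≃ₗ[MvPolynomial (Fin n) 𝕜]
        (MvPolynomial (Fin n) 𝕜 ⧸
          Ideal.span (Set.range fun j => monomial (v j) (1 : 𝕜)))) := by
  refine ⟨fun k => TaylorAux.exact_lemma v k, ⟨?_⟩⟩
  exact Submodule.Quotient.equiv (LinearMap.range (taylorTauGr (𝕜 := 𝕜) v 0))
    (Ideal.span (Set.range fun j => monomial (v j) (1 : 𝕜))) TaylorAux.e0 (TaylorAux.coker_map v)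
end

section
/- For every i ∈ {1,…,c}, the map σ_i squares to zero: for every subset S ⊆ {1,…,r}, σ_i(σ_i(ε_S)) = 0, i.e., the composition σ_i ∘ σ_i : T_k → T_{k+2} is the zero map. -/
open MvPolynomial

variable (𝕜 : Type*) [Field 𝕜] {n r : ℕ}

section TaylorAux

lemma taylorPos_insert {r : ℕ} (S : Finset (Fin r)) (t u : Fin r) (ht : t ∉ S) :
    taylorPos (insert t S) u = if t < u then taylorPos S u + 1 else taylorPos S u := by
  unfold taylorPos
  rw [Finset.filter_insert]
  split
  · rw [Finset.card_insert_of_notMem (fun h => ht (Finset.mem_filter.mp h).1)]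
  · rfl

lemma taylorExp_lemma {n r : ℕ} (v : Fin r → (Fin n →₀ ℕ)) (t u : Fin r) (S : Finset (Fin r)) :
    (v t + S.sup v - (insert t S).sup v)
      + (v u + (insert t S).sup v - (insert u (insert t S)).sup v)
      = v t + v u + S.sup v - (insert u (insert t S)).sup v := by
  have h1 : (insert t S).sup v ≤ v t + S.sup v := by
    rw [Finset.sup_insert]; exact sup_le le_self_add le_add_self
  have h2 : (insert u (insert t S)).sup v ≤ v u + (insert t S).sup v := by
    rw [Finset.sup_insert]; exact sup_le le_self_add le_add_self
  rw [← add_tsub_assoc_of_le h2]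
  congr 1
  have : v t + S.sup v - (insert t S).sup v + (v u + (insert t S).sup v)
      = (v t + S.sup v - (insert t S).sup v + (insert t S).sup v) + v u := by
    rw [add_comm (v u), ← add_assoc]
  rw [this, tsub_add_cancel_of_le h1]
  abel

lemma taylor_neg_one_pow_of_odd_add {R : Type*} [Monoid R] [HasDistribNeg R] {e e' : ℕ}
    (h : Odd (e + e')) : ((-1 : R)) ^ e = -(-1) ^ e' := by
  have h1 : ((-1 : R)) ^ (e + e') = -1 := Odd.neg_one_pow h
  have h2 : ((-1 : R)) ^ e' * ((-1 : R)) ^ e' = 1 := by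
    rw [← pow_add, ← two_mul, pow_mul]; simp
  calc ((-1 : R)) ^ e = (-1) ^ e * ((-1) ^ e' * (-1) ^ e') := by rw [h2, mul_one]
    _ = ((-1) ^ (e + e')) * (-1) ^ e' := by rw [← mul_assoc, ← pow_add]
    _ = -(-1) ^ e' := by rw [h1, neg_one_mul]

lemma htpyEntry_mul {𝕜 : Type*} [Field 𝕜] {n r : ℕ} (v : Fin r → (Fin n →₀ ℕ))
    (f : Fin r → MvPolynomial (Fin n) 𝕜) (S : Finset (Fin r)) (t u : Fin r) :
    htpyEntry 𝕜 v f S t * htpyEntry 𝕜 v f (insert t S) u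
      = (-1) ^ ((S.card + taylorPos S t + 1) + ((insert t S).card + taylorPos (insert t S) u + 1))
          * (f t * f u *
            monomial (v t + v u + S.sup v - (insert u (insert t S)).sup v) 1) := by
  rw [htpyEntry, htpyEntry]
  have hm : (monomial (v t + S.sup v - (insert t S).sup v) (1 : 𝕜))
      * monomial (v u + (insert t S).sup v - (insert u (insert t S)).sup v) 1
      = monomial (v t + v u + S.sup v - (insert u (insert t S)).sup v) 1 := by
    rw [monomial_mul, mul_one, taylorExp_lemma]
  calc ((-1 : MvPolynomial (Fin n) 𝕜) ^ (S.card + taylorPos S t + 1)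
          * (f t * monomial (v t + S.sup v - (insert t S).sup v) 1))
        * ((-1) ^ ((insert t S).card + taylorPos (insert t S) u + 1)
          * (f u * monomial (v u + (insert t S).sup v - (insert u (insert t S)).sup v) 1))
      = (-1) ^ (S.card + taylorPos S t + 1) * (-1) ^ ((insert t S).card + taylorPos (insert t S) u + 1)
        * (f t * f u * ((monomial (v t + S.sup v - (insert t S).sup v) 1)
            * monomial (v u + (insert t S).sup v - (insert u (insert t S)).sup v) 1)) := by ring
    _ = _ := by rw [hm, ← pow_add]

lemma htpyEntry_antisymm {𝕜 : Type*} [Field 𝕜] {n r : ℕ} (v : Fin r → (Fin n →₀ ℕ))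
    (f : Fin r → MvPolynomial (Fin n) 𝕜) (S : Finset (Fin r)) (t u : Fin r)
    (ht : t ∉ S) (hu : u ∉ S) (htu : t ≠ u) :
    htpyEntry 𝕜 v f S t * htpyEntry 𝕜 v f (insert t S) u
      = -(htpyEntry 𝕜 v f S u * htpyEntry 𝕜 v f (insert u S) t) := by
  rw [htpyEntry_mul, htpyEntry_mul]
  have hset : insert t (insert u S) = insert u (insert t S) := Finset.insert_comm t u S
  have hexp : v u + v t + S.sup v = v t + v u + S.sup v := by rw [add_comm (v u) (v t)]
  rw [hset, hexp]
  have hodd : Odd ((S.card + taylorPos S t + 1) + ((insert t S).card + taylorPos (insert t S) u + 1)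
      + ((S.card + taylorPos S u + 1) + ((insert u S).card + taylorPos (insert u S) t + 1))) := by
    rw [Finset.card_insert_of_notMem ht, Finset.card_insert_of_notMem hu,
      taylorPos_insert S t u ht, taylorPos_insert S u t hu]
    rcases lt_or_gt_of_ne htu with h | h
    · rw [if_pos h, if_neg (asymm h)]
      exact ⟨2 * S.card + taylorPos S t + taylorPos S u + 3, by ring⟩
    · rw [if_neg (asymm h), if_pos h]
      exact ⟨2 * S.card + taylorPos S t + taylorPos S u + 3, by ring⟩
  rw [taylor_neg_one_pow_of_odd_add hodd]
  ring

lemma sum_erase_antisymm {α M : Type*} [DecidableEq α] [AddCommGroup M] (s : Finset α)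
    (F : α → α → M) (h : ∀ t ∈ s, ∀ u ∈ s, t ≠ u → F t u = -F u t) :
    ∑ t ∈ s, ∑ u ∈ s.erase t, F t u = 0 := by
  rw [← Finset.sum_sigma s (fun t => s.erase t) (fun p => F p.1 p.2)]
  refine Finset.sum_involution (fun p _ => ⟨p.2, p.1⟩) ?_ ?_ ?_ ?_
  · intro p hp
    simp only [Finset.mem_sigma, Finset.mem_erase] at hp
    rw [h p.1 hp.1 p.2 hp.2.2 (Ne.symm hp.2.1)]
    simp
  · intro p hp _
    simp only [Finset.mem_sigma, Finset.mem_erase] at hp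
    intro hcontra
    exact hp.2.1 (congrArg Sigma.fst hcontra)
  · intro p hp
    simp only [Finset.mem_sigma, Finset.mem_erase] at hp ⊢
    exact ⟨hp.2.2, Ne.symm hp.2.1, hp.1⟩
  · intro p hp
    rfl

end TaylorAux

/-- For every `i ∈ {1,…,c}`, the homotopy `σ_i` squares to zero: for every
subset `S ⊆ {1,…,r}`, `σ_i(σ_i(ε_S)) = 0`, i.e. `σ_i ∘ σ_i : T_k → T_{k+2}` is the zero map.
Here `m_j = x^{v j}` and `a_i = Σ_j f_{i,j} m_j`. -/
theorem taylor_htpy_squared_zero {𝕜 : Type*} [Field 𝕜] {n r c : ℕ}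
    (v : Fin r → (Fin n →₀ ℕ)) (a : Fin c → MvPolynomial (Fin n) 𝕜)
    (f : Fin c → Fin r → MvPolynomial (Fin n) 𝕜)
    (ha : ∀ i, a i = ∑ j : Fin r, f i j * monomial (v j) 1) :
    ∀ i : Fin c,
      (∀ S : Finset (Fin r),
        taylorHtpy 𝕜 v (f i) (taylorHtpy 𝕜 v (f i) (Finsupp.single S 1)) = 0) ∧
      taylorHtpy 𝕜 v (f i) ∘ₗ taylorHtpy 𝕜 v (f i) = 0 := by
  intro i
  have main : ∀ S : Finset (Fin r),
      taylorHtpy 𝕜 v (f i) (taylorHtpy 𝕜 v (f i) (Finsupp.single S 1)) = 0 := by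
    intro S
    have h1 : taylorHtpy 𝕜 v (f i) (Finsupp.single S 1)
        = ∑ t ∈ Sᶜ, Finsupp.single (insert t S) (htpyEntry 𝕜 v (f i) S t) := by
      rw [taylorHtpy, Finsupp.lsum_single, LinearMap.toSpanSingleton_apply, one_smul]
    rw [h1, map_sum]
    have h2 : ∀ t : Fin r,
        taylorHtpy 𝕜 v (f i) (Finsupp.single (insert t S) (htpyEntry 𝕜 v (f i) S t))
        = ∑ u ∈ Sᶜ.erase t, Finsupp.single (insert u (insert t S))
            (htpyEntry 𝕜 v (f i) S t * htpyEntry 𝕜 v (f i) (insert t S) u) := by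
      intro t
      rw [taylorHtpy, Finsupp.lsum_single, LinearMap.toSpanSingleton_apply, Finset.smul_sum,
        Finset.compl_insert]
      refine Finset.sum_congr rfl fun u hu => ?_
      rw [Finsupp.smul_single, smul_eq_mul]
    simp_rw [h2]
    refine sum_erase_antisymm Sᶜ
      (fun t u => Finsupp.single (insert u (insert t S))
        (htpyEntry 𝕜 v (f i) S t * htpyEntry 𝕜 v (f i) (insert t S) u)) ?_
    intro t htc u huc htu
    rw [Finset.mem_compl] at htc huc
    rw [htpyEntry_antisymm v (f i) S t u htc huc htu, Finset.insert_comm u t,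
      Finsupp.single_neg]
  refine ⟨main, ?_⟩
  apply Finsupp.lhom_ext
  intro S b
  have hb : (Finsupp.single S b : TaylorModule 𝕜 n r) = b • Finsupp.single S 1 := by
    rw [Finsupp.smul_single, smul_eq_mul, mul_one]
  simp only [LinearMap.comp_apply, LinearMap.zero_apply, hb, map_smul, main S, smul_zero]
end

section
/- For every j ∈ {1,…,c}, the map σ_j is a homotopy for multiplication by a_j on the Taylor complex: for every subset S ⊆ {1,…,r}, τ(σ_j(ε_S)) + σ_j(τ(ε_S)) = a_j · ε_S, i.e., τ ∘ σ_j + σ_j ∘ τ equals multiplication by a_j on each T_k. -/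
open MvPolynomial

variable (𝕜 : Type*) [Field 𝕜] {n r : ℕ}

-- position lemmas
lemma pos_le (S : Finset (Fin r)) (t : Fin r) : taylorPos S t ≤ S.card + 1 := by
  have := Finset.card_filter_le S (fun s => s < t)
  unfold taylorPos; omega

lemma pos_le_of_mem {S : Finset (Fin r)} {s : Fin r} (h : s ∈ S) : taylorPos S s ≤ S.card := by
  have hss : (S.filter fun x => x < s) ⊂ S :=
    Finset.filter_ssubset.mpr ⟨s, h, lt_irrefl s⟩
  have := Finset.card_lt_card hss
  unfold taylorPos; omega

lemma pos_insert_self {S : Finset (Fin r)} (t : Fin r) :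
    taylorPos (insert t S) t = taylorPos S t := by
  unfold taylorPos
  rw [Finset.filter_insert, if_neg (lt_irrefl t)]

lemma pos_erase_self (S : Finset (Fin r)) (s : Fin r) :
    taylorPos (S.erase s) s = taylorPos S s := by
  unfold taylorPos
  rw [Finset.filter_erase, Finset.erase_eq_of_notMem (by simp)]

lemma pos_insert_of_ne {S : Finset (Fin r)} {t : Fin r} (ht : t ∉ S) (s : Fin r) (hne : t ≠ s) :
    taylorPos (insert t S) s = taylorPos S s + if t < s then 1 else 0 := by
  unfold taylorPos
  rw [Finset.filter_insert]
  split
  · rw [Finset.card_insert_of_notMem (fun hmem => ht (Finset.mem_filter.mp hmem).1)]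
  · simp

lemma pos_erase_of_ne {S : Finset (Fin r)} {s : Fin r} (hs : s ∈ S) (t : Fin r) (hne : s ≠ t) :
    taylorPos (S.erase s) t + (if s < t then 1 else 0) = taylorPos S t := by
  unfold taylorPos
  rw [Finset.filter_erase]
  by_cases h : s < t
  · have hmem : s ∈ S.filter fun x => x < t := Finset.mem_filter.mpr ⟨hs, h⟩
    rw [if_pos h, Finset.card_erase_of_mem hmem]
    have : 0 < (S.filter fun x => x < t).card := Finset.card_pos.mpr ⟨s, hmem⟩
    omega
  · have hmem : s ∉ (S.filter fun x => x < t) := fun hmem => h (Finset.mem_filter.mp hmem).2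
    rw [if_neg h, Finset.erase_eq_of_notMem hmem]

-- sup lemmas
lemma sup_le_insert (v : Fin r → (Fin n →₀ ℕ)) (S : Finset (Fin r)) (t : Fin r) :
    S.sup v ≤ (insert t S).sup v := Finset.sup_mono (Finset.subset_insert t S)

lemma insert_sup_le (v : Fin r → (Fin n →₀ ℕ)) (S : Finset (Fin r)) (t : Fin r) :
    (insert t S).sup v ≤ v t + S.sup v := by
  rw [Finset.sup_insert]
  exact sup_le (self_le_add_right _ _) (self_le_add_left _ _)

lemma sup_le_erase (v : Fin r → (Fin n →₀ ℕ)) {S : Finset (Fin r)} {s : Fin r} (h : s ∈ S) :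
    S.sup v ≤ v s + (S.erase s).sup v := by
  refine Finset.sup_le fun x hx => ?_
  rcases eq_or_ne x s with rfl | hne
  · exact self_le_add_right _ _
  · exact le_trans (Finset.le_sup (Finset.mem_erase.mpr ⟨hne, hx⟩)) (self_le_add_left _ _)

lemma tsub_key {A B z : Fin n →₀ ℕ} (h1 : A ≤ B) (h2 : B ≤ z + A) :
    (B - A) + (z + A - B) = z := by
  rw [add_comm, tsub_add_tsub_cancel h2 h1, add_tsub_cancel_right]

lemma diag1 (v : Fin r → (Fin n →₀ ℕ)) (f : Fin r → MvPolynomial (Fin n) 𝕜)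
    {S : Finset (Fin r)} {t : Fin r} (ht : t ∉ S) :
    htpyEntry 𝕜 v f S t * taylorEntry 𝕜 v (insert t S) t = f t * monomial (v t) 1 := by
  rw [htpyEntry, taylorEntry, pos_insert_self, Finset.card_insert_of_notMem ht,
    Finset.erase_insert ht]
  have hp : taylorPos S t ≤ S.card + 1 := pos_le S t
  have he : (S.card + taylorPos S t + 1) + ((S.card + 1) - taylorPos S t) = 2 * (S.card + 1) := by
    omega
  have hs : ((-1 : MvPolynomial (Fin n) 𝕜)) ^ (S.card + taylorPos S t + 1) *
      (-1) ^ ((S.card + 1) - taylorPos S t) = 1 := by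
    rw [← pow_add, he, pow_mul, neg_one_sq, one_pow]
  have hm : (monomial (v t + S.sup v - (insert t S).sup v) (1 : 𝕜)) *
      monomial ((insert t S).sup v - S.sup v) 1 = monomial (v t) 1 := by
    rw [monomial_mul, one_mul, add_comm,
      tsub_key (sup_le_insert v S t) (insert_sup_le v S t)]
  calc ((-1 : MvPolynomial (Fin n) 𝕜) ^ (S.card + taylorPos S t + 1) *
        (f t * monomial (v t + S.sup v - (insert t S).sup v) 1)) *
      ((-1) ^ ((S.card + 1) - taylorPos S t) * monomial ((insert t S).sup v - S.sup v) 1)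
      = ((-1) ^ (S.card + taylorPos S t + 1) * (-1) ^ ((S.card + 1) - taylorPos S t)) *
        (f t * (monomial (v t + S.sup v - (insert t S).sup v) 1 *
          monomial ((insert t S).sup v - S.sup v) 1)) := by ring
    _ = f t * monomial (v t) 1 := by rw [hs, hm, one_mul]

lemma diag2 (v : Fin r → (Fin n →₀ ℕ)) (f : Fin r → MvPolynomial (Fin n) 𝕜)
    {S : Finset (Fin r)} {s : Fin r} (hs : s ∈ S) :
    taylorEntry 𝕜 v S s * htpyEntry 𝕜 v f (S.erase s) s = f s * monomial (v s) 1 := by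
  rw [taylorEntry, htpyEntry, pos_erase_self, Finset.card_erase_of_mem hs,
    Finset.insert_erase hs]
  have hp : taylorPos S s ≤ S.card := pos_le_of_mem hs
  have hk : 1 ≤ S.card := Finset.card_pos.mpr ⟨s, hs⟩
  have hp1 : 1 ≤ taylorPos S s := Nat.le_add_left 1 _
  have he : (S.card - taylorPos S s) + ((S.card - 1) + taylorPos S s + 1) = 2 * S.card := by
    omega
  have hsg : ((-1 : MvPolynomial (Fin n) 𝕜)) ^ (S.card - taylorPos S s) *
      (-1) ^ ((S.card - 1) + taylorPos S s + 1) = 1 := by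
    rw [← pow_add, he, pow_mul, neg_one_sq, one_pow]
  have hm : (monomial (S.sup v - (S.erase s).sup v) (1 : 𝕜)) *
      monomial (v s + (S.erase s).sup v - S.sup v) 1 = monomial (v s) 1 := by
    rw [monomial_mul, one_mul,
      tsub_key (Finset.sup_mono (Finset.erase_subset s S)) (sup_le_erase v hs)]
  calc ((-1 : MvPolynomial (Fin n) 𝕜) ^ (S.card - taylorPos S s) *
        monomial (S.sup v - (S.erase s).sup v) 1) *
      ((-1) ^ ((S.card - 1) + taylorPos S s + 1) *
        (f s * monomial (v s + (S.erase s).sup v - S.sup v) 1))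
      = ((-1) ^ (S.card - taylorPos S s) * (-1) ^ ((S.card - 1) + taylorPos S s + 1)) *
        (f s * (monomial (S.sup v - (S.erase s).sup v) 1 *
          monomial (v s + (S.erase s).sup v - S.sup v) 1)) := by ring
    _ = f s * monomial (v s) 1 := by rw [hsg, hm, one_mul]

lemma cancel_helper {Q : Type*} [CommRing Q] (g M1 M2 M3 M4 M : Q) (e1 e2 e3 e4 : ℕ)
    (hodd : Odd (e1 + e2 + (e3 + e4)))
    (h12 : M1 * M2 = M) (h34 : M3 * M4 = M) :
    ((-1 : Q) ^ e1 * (g * M1)) * ((-1) ^ e2 * M2) +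
      ((-1) ^ e3 * M3) * ((-1) ^ e4 * (g * M4)) = 0 := by
  have hp2 : (-1 : Q) ^ (e1 + e2) * (-1) ^ (e3 + e4) = -1 := by
    rw [← pow_add]; exact Odd.neg_one_pow hodd
  have hsq : (-1 : Q) ^ (e3 + e4) * (-1) ^ (e3 + e4) = 1 := by
    rw [← pow_add]; exact Even.neg_one_pow ⟨e3 + e4, rfl⟩
  have hpe : (-1 : Q) ^ (e1 + e2) + (-1) ^ (e3 + e4) = 0 := by
    linear_combination ((-1 : Q) ^ (e3 + e4)) * hp2 - ((-1 : Q) ^ (e1 + e2)) * hsq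
  calc ((-1 : Q) ^ e1 * (g * M1)) * ((-1) ^ e2 * M2) +
      ((-1) ^ e3 * M3) * ((-1) ^ e4 * (g * M4))
      = (-1) ^ (e1 + e2) * (g * (M1 * M2)) + (-1) ^ (e3 + e4) * (g * (M3 * M4)) := by
        rw [pow_add, pow_add]; ring
    _ = ((-1) ^ (e1 + e2) + (-1) ^ (e3 + e4)) * (g * M) := by rw [h12, h34]; ring
    _ = 0 := by rw [hpe, zero_mul]

lemma cancel (v : Fin r → (Fin n →₀ ℕ)) (f : Fin r → MvPolynomial (Fin n) 𝕜)
    {S : Finset (Fin r)} {s t : Fin r} (hs : s ∈ S) (ht : t ∉ S) :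
    htpyEntry 𝕜 v f S t * taylorEntry 𝕜 v (insert t S) s +
      taylorEntry 𝕜 v S s * htpyEntry 𝕜 v f (S.erase s) t = 0 := by
  have hne : s ≠ t := fun h => ht (h ▸ hs)
  have hA : S.sup v ≤ (insert t S).sup v := sup_le_insert v S t
  have hB : (insert t S).sup v ≤ v t + S.sup v := insert_sup_le v S t
  have hD : (S.erase s).sup v ≤ S.sup v := Finset.sup_mono (Finset.erase_subset s S)
  have hE : (insert t (S.erase s)).sup v ≤ (insert t S).sup v :=
    Finset.sup_mono (Finset.insert_subset_insert t (Finset.erase_subset s S))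
  have hE2 : (insert t (S.erase s)).sup v ≤ v t + (S.erase s).sup v :=
    insert_sup_le v (S.erase s) t
  have hexp : (v t + S.sup v - (insert t S).sup v) +
        ((insert t S).sup v - (insert t (S.erase s)).sup v) =
      (S.sup v - (S.erase s).sup v) +
        (v t + (S.erase s).sup v - (insert t (S.erase s)).sup v) := by
    ext x
    simp only [Finsupp.add_apply, Finsupp.tsub_apply]
    have h1 := hA x; have h2 := hB x; have h3 := hD x; have h4 := hE x; have h5 := hE2 x
    simp only [Finsupp.add_apply] at h2 h5
    omega
  rw [htpyEntry, htpyEntry, taylorEntry, taylorEntry, Finset.card_insert_of_notMem ht,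
    Finset.card_erase_of_mem hs, Finset.erase_insert_of_ne (Ne.symm hne)]
  refine cancel_helper (f t) _ _ _ _
    (monomial ((S.sup v - (S.erase s).sup v) +
      (v t + (S.erase s).sup v - (insert t (S.erase s)).sup v)) 1) _ _ _ _ ?_ ?_ ?_
  · -- parity
    have hq := pos_insert_of_ne ht s (Ne.symm hne)
    have hq' := pos_erase_of_ne hs t hne
    have hps : taylorPos S s ≤ S.card := pos_le_of_mem hs
    have hk : 1 ≤ S.card := Finset.card_pos.mpr ⟨s, hs⟩
    have hpt1 : 1 ≤ taylorPos S t := Nat.le_add_left 1 _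
    rw [Nat.odd_iff]
    rcases hne.lt_or_gt with hlt | hlt
    · rw [if_neg (asymm hlt)] at hq
      rw [if_pos hlt] at hq'
      omega
    · rw [if_pos hlt] at hq
      rw [if_neg (asymm hlt)] at hq'
      omega
  · rw [monomial_mul, one_mul, hexp]
  · rw [monomial_mul, one_mul]

lemma tau_single (v : Fin r → (Fin n →₀ ℕ)) (S : Finset (Fin r))
    (q : MvPolynomial (Fin n) 𝕜) :
    taylorTau 𝕜 v (Finsupp.single S q) =
      ∑ s ∈ S, Finsupp.single (S.erase s) (q * taylorEntry 𝕜 v S s) := by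
  rw [taylorTau, Finsupp.lsum_single, LinearMap.toSpanSingleton_apply, Finset.smul_sum]
  simp only [Finsupp.smul_single, smul_eq_mul]

lemma htpy_single (v : Fin r → (Fin n →₀ ℕ)) (f : Fin r → MvPolynomial (Fin n) 𝕜)
    (S : Finset (Fin r)) (q : MvPolynomial (Fin n) 𝕜) :
    taylorHtpy 𝕜 v f (Finsupp.single S q) =
      ∑ t ∈ Sᶜ, Finsupp.single (insert t S) (q * htpyEntry 𝕜 v f S t) := by
  rw [taylorHtpy, Finsupp.lsum_single, LinearMap.toSpanSingleton_apply, Finset.smul_sum]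
  simp only [Finsupp.smul_single, smul_eq_mul]

lemma key_step (v : Fin r → (Fin n →₀ ℕ)) (f : Fin r → MvPolynomial (Fin n) 𝕜)
    (S : Finset (Fin r)) :
    taylorTau 𝕜 v (taylorHtpy 𝕜 v f (Finsupp.single S 1)) +
      taylorHtpy 𝕜 v f (taylorTau 𝕜 v (Finsupp.single S 1)) =
      Finsupp.single S (∑ t : Fin r, f t * monomial (v t) 1) := by
  rw [htpy_single, tau_single, map_sum, map_sum]
  simp only [tau_single, htpy_single, one_mul]
  have h1 : ∑ t ∈ Sᶜ, ∑ s ∈ insert t S,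
      Finsupp.single ((insert t S).erase s)
        (htpyEntry 𝕜 v f S t * taylorEntry 𝕜 v (insert t S) s)
      = ∑ t ∈ Sᶜ, (Finsupp.single S (f t * monomial (v t) 1) +
          ∑ s ∈ S, Finsupp.single ((insert t S).erase s)
            (htpyEntry 𝕜 v f S t * taylorEntry 𝕜 v (insert t S) s)) := by
    refine Finset.sum_congr rfl fun t ht => ?_
    have ht' : t ∉ S := Finset.mem_compl.mp ht
    rw [Finset.sum_insert ht', Finset.erase_insert ht', diag1 𝕜 v f ht']
  have h2 : ∑ s ∈ S, ∑ t ∈ (S.erase s)ᶜ,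
      Finsupp.single (insert t (S.erase s))
        (taylorEntry 𝕜 v S s * htpyEntry 𝕜 v f (S.erase s) t)
      = ∑ s ∈ S, (Finsupp.single S (f s * monomial (v s) 1) +
          ∑ t ∈ Sᶜ, Finsupp.single (insert t (S.erase s))
            (taylorEntry 𝕜 v S s * htpyEntry 𝕜 v f (S.erase s) t)) := by
    refine Finset.sum_congr rfl fun s hs => ?_
    have hcompl : (S.erase s)ᶜ = insert s Sᶜ := by
      ext x
      simp only [Finset.mem_compl, Finset.mem_erase, Finset.mem_insert, not_and]
      by_cases hx : x = s <;> simp [hx]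
    rw [hcompl, Finset.sum_insert (by simp [hs] : s ∉ Sᶜ), Finset.insert_erase hs,
      diag2 𝕜 v f hs]
  rw [h1, h2, Finset.sum_add_distrib, Finset.sum_add_distrib]
  have h3 : (∑ t ∈ Sᶜ, ∑ s ∈ S, Finsupp.single ((insert t S).erase s)
        (htpyEntry 𝕜 v f S t * taylorEntry 𝕜 v (insert t S) s)) +
      ∑ s ∈ S, ∑ t ∈ Sᶜ, Finsupp.single (insert t (S.erase s))
        (taylorEntry 𝕜 v S s * htpyEntry 𝕜 v f (S.erase s) t) = 0 := by
    have hY : ∑ s ∈ S, ∑ t ∈ Sᶜ, Finsupp.single (insert t (S.erase s))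
          (taylorEntry 𝕜 v S s * htpyEntry 𝕜 v f (S.erase s) t)
        = ∑ t ∈ Sᶜ, ∑ s ∈ S, Finsupp.single (insert t (S.erase s))
          (taylorEntry 𝕜 v S s * htpyEntry 𝕜 v f (S.erase s) t) := Finset.sum_comm
    rw [hY, ← Finset.sum_add_distrib]
    refine Finset.sum_eq_zero fun t ht => ?_
    rw [← Finset.sum_add_distrib]
    refine Finset.sum_eq_zero fun s hs => ?_
    have ht' : t ∉ S := Finset.mem_compl.mp ht
    have hne : s ≠ t := fun h => ht' (h ▸ hs)
    rw [Finset.erase_insert_of_ne (Ne.symm hne), ← Finsupp.single_add,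
      cancel 𝕜 v f hs ht', Finsupp.single_zero]
  have h4 : (∑ t ∈ Sᶜ, Finsupp.single S (f t * monomial (v t) 1)) +
      ∑ s ∈ S, Finsupp.single S (f s * monomial (v s) 1)
      = Finsupp.single S (∑ t : Fin r, f t * monomial (v t) 1) := by
    rw [add_comm, Finset.sum_add_sum_compl, ← Finsupp.single_finset_sum]
  rw [add_add_add_comm, h4, h3, add_zero]
/-- For every `j ∈ {1,…,c}`, the map `σ_j` is a homotopy for multiplication
by `a_j` on the Taylor complex: for every subset `S ⊆ {1,…,r}`,
`τ(σ_j(ε_S)) + σ_j(τ(ε_S)) = a_j · ε_S`, i.e. `τ ∘ σ_j + σ_j ∘ τ` is multiplication by `a_j`.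
Here `m_j = x^{v j}` and `a_i = Σ_j f_{i,j} m_j`. -/
theorem taylor_htpy_is_homotopy {𝕜 : Type*} [Field 𝕜] {n r c : ℕ}
    (v : Fin r → (Fin n →₀ ℕ)) (a : Fin c → MvPolynomial (Fin n) 𝕜)
    (f : Fin c → Fin r → MvPolynomial (Fin n) 𝕜)
    (ha : ∀ i, a i = ∑ j : Fin r, f i j * monomial (v j) 1) :
    ∀ j : Fin c,
      (∀ S : Finset (Fin r),
        taylorTau 𝕜 v (taylorHtpy 𝕜 v (f j) (Finsupp.single S 1)) +
          taylorHtpy 𝕜 v (f j) (taylorTau 𝕜 v (Finsupp.single S 1)) =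
          a j • Finsupp.single S 1) ∧
      taylorTau 𝕜 v ∘ₗ taylorHtpy 𝕜 v (f j) + taylorHtpy 𝕜 v (f j) ∘ₗ taylorTau 𝕜 v =
        a j • LinearMap.id := by
  intro j
  have part1 : ∀ S : Finset (Fin r),
      taylorTau 𝕜 v (taylorHtpy 𝕜 v (f j) (Finsupp.single S 1)) +
        taylorHtpy 𝕜 v (f j) (taylorTau 𝕜 v (Finsupp.single S 1)) =
        a j • Finsupp.single S 1 := by
    intro S
    rw [key_step 𝕜 v (f j) S, Finsupp.smul_single, smul_eq_mul, mul_one, ha j]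
  refine ⟨part1, ?_⟩
  apply Finsupp.lhom_ext'
  intro S
  apply LinearMap.ext_ring
  simp only [LinearMap.comp_apply, Finsupp.lsingle_apply, LinearMap.add_apply,
    LinearMap.smul_apply, LinearMap.id_apply]
  exact part1 S
end
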